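/- (Wigner–Yanase information matrix of a PQC with thermal-state initialization.) Let D_i = ∂_i ρ(φ) and define I^{WY}_{ij}(φ) = Σ_{k,ℓ<d} (4/(√λ_k + √λ_ℓ)²) ⟨k| D_i |ℓ⟩ ⟨ℓ| D_j |k⟩, where |k⟩ = U(φ)|k̃⟩ and (|k̃⟩, λ_k) is the eigensystem of ρ. Then for all i, j ∈ {1,…,J}: I^{WY}_{ij}(φ) = 4 · Tr[{A_i, A_j} ρ] − 8 · Tr[A_i √ρ A_j √ρ], where √ρ = e^{−G/2}/√Z, A_j = U_{R_j}† H_j U_{R_j}, and {X,Y} = XY + YX. -/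

import Mathlib

open Matrix

noncomputable section

attribute [local instance] Matrix.linftyOpNormedAddCommGroup Matrix.linftyOpNormedSpace

/-- Square complex matrices of size `d`. -/
abbrev Mat (d : ℕ) := Matrix (Fin d) (Fin d) ℂ

/-- Descending product `f (a + n - 1) * ⋯ * f (a + 1) * f a` (empty product is `1`). -/
def descProd {d : ℕ} (f : ℕ → Mat d) (a : ℕ) : ℕ → Mat d
  | 0 => 1
  | n + 1 => f (a + n) * descProd f a n

/-- The `j`-th layer `U_j(φ_j) = exp (−i φ_j H_j) V_j`. -/
def layer {d : ℕ} (H V : ℕ → Mat d) (φ : ℕ → ℝ) (j : ℕ) : Mat d :=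
  NormedSpace.exp ((-(Complex.I * (φ j : ℂ))) • H j) * V j

/-- `U_{R_j} = U_j ⋯ U_1`. -/
def UR {d : ℕ} (H V : ℕ → Mat d) (φ : ℕ → ℝ) (j : ℕ) : Mat d :=
  descProd (layer H V φ) 1 j

/-- `U_{L_j} = U_J ⋯ U_j`. -/
def UL {d : ℕ} (H V : ℕ → Mat d) (φ : ℕ → ℝ) (J j : ℕ) : Mat d :=
  descProd (layer H V φ) j (J + 1 - j)

/-- The full layered circuit `U(φ) = U_J ⋯ U_1`. -/
def Ufull {d : ℕ} (H V : ℕ → Mat d) (φ : ℕ → ℝ) (J : ℕ) : Mat d :=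
  UR H V φ J

/-- `B_j = U_{L_{j+1}} H_j U_{L_{j+1}}†`. -/
def Bmat {d : ℕ} (H V : ℕ → Mat d) (φ : ℕ → ℝ) (J j : ℕ) : Mat d :=
  UL H V φ J (j + 1) * H j * (UL H V φ J (j + 1))ᴴ

/-- `A_j = U_{R_j}† H_j U_{R_j}`. -/
def Amat {d : ℕ} (H V : ℕ → Mat d) (φ : ℕ → ℝ) (j : ℕ) : Mat d :=
  (UR H V φ j)ᴴ * H j * UR H V φ j

/-- The thermal state `ρ = e^{−G}/Z`. -/
def thermal {d : ℕ} (G : Mat d) (Z : ℝ) : Mat d :=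
  (Z : ℂ)⁻¹ • NormedSpace.exp (-G)

/-- The parameterized state `ρ(φ) = U(φ) ρ U(φ)†`. -/
def rhoFun {d : ℕ} (H V : ℕ → Mat d) (J : ℕ) (G : Mat d) (Z : ℝ) (φ : ℕ → ℝ) : Mat d :=
  Ufull H V φ J * thermal G Z * (Ufull H V φ J)ᴴ

/-- The sesquilinear form `⟨u| M |v⟩`, conjugate-linear in `u`. -/
def braket {d : ℕ} (u : Fin d → ℂ) (M : Mat d) (v : Fin d → ℂ) : ℂ :=
  star u ⬝ᵥ M.mulVec v

/-- `√ρ = e^{−G/2}/√Z`, the square root of the thermal state. -/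
def sqrtThermal {d : ℕ} (G : Mat d) (Z : ℝ) : Mat d :=
  ((Real.sqrt Z : ℂ))⁻¹ • NormedSpace.exp ((-(2⁻¹ : ℂ)) • G)

section WYAux

attribute [local instance] Matrix.linftyOpNormedRing Matrix.linftyOpNormedAlgebra

open scoped ComplexOrder

/-! ### `descProd` lemmas -/

lemma descProd_succ {d : ℕ} (f : ℕ → Mat d) (a n : ℕ) :
    descProd f a (n+1) = f (a+n) * descProd f a n := rfl

lemma descProd_add {d : ℕ} (f : ℕ → Mat d) (a m n : ℕ) :
    descProd f a (n + m) = descProd f (a + m) n * descProd f a m := by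
  induction n with
  | zero => simp [descProd]
  | succ n ih =>
    have h : n + 1 + m = (n + m) + 1 := by omega
    have h2 : a + (n + m) = a + m + n := by omega
    rw [h, descProd_succ, h2, ih, descProd_succ, mul_assoc]

lemma descProd_congr {d : ℕ} {f g : ℕ → Mat d} (a n : ℕ)
    (h : ∀ m, a ≤ m → m < a + n → f m = g m) :
    descProd f a n = descProd g a n := by
  induction n with
  | zero => rfl
  | succ n ih =>
    rw [descProd_succ, descProd_succ, h _ (by omega) (by omega),
      ih (fun m h1 h2 => h m h1 (by omega))]

lemma descProd_split {d : ℕ} (f : ℕ → Mat d) {i n : ℕ} (h1 : 1 ≤ i) (h2 : i ≤ n) :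
    descProd f 1 n = descProd f (i+1) (n-i) * (f i * descProd f 1 (i-1)) := by
  have e1 : n = (n - i) + (1 + (i-1)) := by omega
  conv_lhs => rw [e1]
  rw [descProd_add, descProd_add f 1 (i-1) 1, descProd_succ]
  simp only [descProd, mul_one,
    show 1 + (1 + (i-1)) = i + 1 from by omega,
    show 1 + (i-1) + 0 = i from by omega,
    show n - i + (1 + (i - 1)) - (1 + (i-1)) = n - i from by omega,
    mul_assoc]

/-! ### unitarity -/

lemma exp_skew_mem {d : ℕ} {A : Mat d} (hA : Aᴴ = -A) :
    NormedSpace.exp A ∈ Matrix.unitaryGroup (Fin d) ℂ := by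
  rw [Matrix.mem_unitaryGroup_iff]
  have h1 : star (NormedSpace.exp A) = NormedSpace.exp (-A) := by
    rw [Matrix.star_eq_conjTranspose, ← Matrix.exp_conjTranspose, hA]
  rw [h1, ← Matrix.exp_add_of_commute _ _ (Commute.neg_right (Commute.refl A)),
    add_neg_cancel, NormedSpace.exp_zero]

lemma layer_mem {d : ℕ} {H V : ℕ → Mat d} (hH : ∀ j, (H j).IsHermitian)
    (hV : ∀ j, V j ∈ Matrix.unitaryGroup (Fin d) ℂ) (φ : ℕ → ℝ) (m : ℕ) :
    layer H V φ m ∈ Matrix.unitaryGroup (Fin d) ℂ := by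
  refine Submonoid.mul_mem _ (exp_skew_mem ?_) (hV m)
  rw [Matrix.conjTranspose_smul, (hH m).eq]
  rw [← neg_smul]
  congr 1
  simp [Complex.ext_iff]

lemma descProd_mem {d : ℕ} {f : ℕ → Mat d} (a n : ℕ)
    (h : ∀ m, f m ∈ Matrix.unitaryGroup (Fin d) ℂ) :
    descProd f a n ∈ Matrix.unitaryGroup (Fin d) ℂ := by
  induction n with
  | zero => exact Submonoid.one_mem _
  | succ n ih => exact Submonoid.mul_mem _ (h _) ih

lemma mem_star_self {d : ℕ} {A : Mat d} (h : A ∈ Matrix.unitaryGroup (Fin d) ℂ) :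
    Aᴴ * A = 1 := by
  have := (Unitary.mem_iff.mp h).1
  simpa [Matrix.star_eq_conjTranspose] using this

/-! ### circuit decompositions -/

lemma layer_update_ne {d : ℕ} (H V : ℕ → Mat d) (φ : ℕ → ℝ) {i m : ℕ} (x : ℝ) (h : m ≠ i) :
    layer H V (Function.update φ i x) m = layer H V φ m := by
  simp [layer, Function.update_of_ne h]

lemma Ufull_update {d J : ℕ} (H V : ℕ → Mat d) (φ : ℕ → ℝ) {i : ℕ}
    (h1 : 1 ≤ i) (h2 : i ≤ J) (x : ℝ) :
    Ufull H V (Function.update φ i x) J =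
      UL H V φ J (i+1) *
        (NormedSpace.exp ((-(Complex.I * (x : ℂ))) • H i) * (V i * UR H V φ (i-1))) := by
  have hUL : UL H V φ J (i+1) = descProd (layer H V φ) (i+1) (J-i) := by
    rw [UL, show J + 1 - (i+1) = J - i from by omega]
  have hc1 : descProd (layer H V (Function.update φ i x)) (i+1) (J-i)
      = descProd (layer H V φ) (i+1) (J-i) := by
    apply descProd_congr
    intro m hm hm'
    exact layer_update_ne H V φ x (by omega)
  have hc2 : descProd (layer H V (Function.update φ i x)) 1 (i-1)
      = descProd (layer H V φ) 1 (i-1) := by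
    apply descProd_congr
    intro m hm hm'
    exact layer_update_ne H V φ x (by omega)
  rw [Ufull, UR, descProd_split _ h1 h2, hUL, hc1, hc2]
  rw [show layer H V (Function.update φ i x) i
      = NormedSpace.exp ((-(Complex.I * (x : ℂ))) • H i) * V i from by
    simp [layer, Function.update_self]]
  rw [UR, mul_assoc]

lemma UR_split {d : ℕ} (H V : ℕ → Mat d) (φ : ℕ → ℝ) {i : ℕ} (h1 : 1 ≤ i) :
    UR H V φ i = layer H V φ i * UR H V φ (i-1) := by
  rw [UR, UR]
  conv_lhs => rw [show i = (i-1) + 1 from by omega]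
  rw [descProd_succ, show 1 + (i-1) = i from by omega]

lemma Ufull_factor {d J : ℕ} (H V : ℕ → Mat d) (φ : ℕ → ℝ) {i : ℕ}
    (h1 : 1 ≤ i) (h2 : i ≤ J) :
    Ufull H V φ J = UL H V φ J (i+1) * UR H V φ i := by
  have h := Ufull_update H V φ h1 h2 (φ i)
  rw [Function.update_eq_self] at h
  rw [h]
  congr 1
  rw [UR_split H V φ h1, layer, mul_assoc]

/-- The derivative of the parameterized state. -/
lemma hasDerivAt_rho {d J : ℕ} {H V : ℕ → Mat d} (hH : ∀ j, (H j).IsHermitian)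
    (hV : ∀ j, V j ∈ Matrix.unitaryGroup (Fin d) ℂ) (G : Mat d) (Z : ℝ)
    (φ : ℕ → ℝ) {i : ℕ} (h1 : 1 ≤ i) (h2 : i ≤ J) :
    HasDerivAt (fun x : ℝ => rhoFun H V J G Z (Function.update φ i x))
      ((-Complex.I) • (Bmat H V φ J i * rhoFun H V J G Z φ
        - rhoFun H V J G Z φ * Bmat H V φ J i)) (φ i) := by
  set L := UL H V φ J (i+1) with hLdef
  set M : Mat d := (-Complex.I) • H i with hMdef
  set S : Mat d := (V i * UR H V φ (i-1)) * thermal G Z * (V i * UR H V φ (i-1))ᴴ with hSdef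
  have hLmem : L ∈ Matrix.unitaryGroup (Fin d) ℂ :=
    descProd_mem _ _ (layer_mem hH hV φ)
  have hsmul : ∀ x : ℝ, (x • M : Mat d) = (-(Complex.I * (x : ℂ))) • H i := by
    intro x
    rw [← algebraMap_smul ℂ x M, Complex.coe_algebraMap, hMdef, smul_smul]
    congr 1
    ring
  have hsmulH : ∀ x : ℝ, (x • Mᴴ : Mat d) = ((Complex.I * (x : ℂ))) • H i := by
    intro x
    rw [← algebraMap_smul ℂ x Mᴴ, Complex.coe_algebraMap, hMdef,
      Matrix.conjTranspose_smul, (hH i).eq, smul_smul]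
    congr 1
    simp [Complex.ext_iff]
  have hexpH : ∀ x : ℝ, (NormedSpace.exp (x • M))ᴴ = NormedSpace.exp (x • Mᴴ) := by
    intro x
    rw [← Matrix.exp_conjTranspose]
    congr 1
    rw [hsmul x, hsmulH x, Matrix.conjTranspose_smul, (hH i).eq]
    congr 1
    simp [Complex.ext_iff]
  have key : ∀ x : ℝ, rhoFun H V J G Z (Function.update φ i x)
      = L * NormedSpace.exp (x • M) * S * NormedSpace.exp (x • Mᴴ) * Lᴴ := by
    intro x
    rw [rhoFun, Ufull_update H V φ h1 h2 x, ← hLdef, ← hsmul x]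
    rw [Matrix.conjTranspose_mul, Matrix.conjTranspose_mul, hexpH x]
    simp only [hSdef, Matrix.mul_assoc]
  have d1 : HasDerivAt (fun x : ℝ => NormedSpace.exp (x • M))
      (NormedSpace.exp ((φ i) • M) * M) (φ i) := by
    have := hasDerivAt_exp_smul_const (𝕂 := ℝ) M (φ i)
    exact this
  have d2 : HasDerivAt (fun x : ℝ => NormedSpace.exp (x • Mᴴ))
      (NormedSpace.exp ((φ i) • Mᴴ) * Mᴴ) (φ i) := by
    have := hasDerivAt_exp_smul_const (𝕂 := ℝ) Mᴴ (φ i)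
    exact this
  have hd : HasDerivAt
      (fun x : ℝ => L * NormedSpace.exp (x • M) * S * NormedSpace.exp (x • Mᴴ) * Lᴴ)
      ((L * (NormedSpace.exp ((φ i) • M) * M) * S * NormedSpace.exp ((φ i) • Mᴴ)
        + L * NormedSpace.exp ((φ i) • M) * S
          * (NormedSpace.exp ((φ i) • Mᴴ) * Mᴴ)) * Lᴴ) (φ i) := by
    exact (((d1.const_mul L).mul_const S).mul d2).mul_const Lᴴ
  have hfun : (fun x : ℝ => rhoFun H V J G Z (Function.update φ i x))
      = fun x : ℝ => L * NormedSpace.exp (x • M) * S * NormedSpace.exp (x • Mᴴ) * Lᴴ :=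
    funext key
  rw [hfun]
  convert hd using 1
  have hrho : rhoFun H V J G Z φ
      = L * NormedSpace.exp ((φ i) • M) * S * NormedSpace.exp ((φ i) • Mᴴ) * Lᴴ := by
    have := key (φ i)
    rwa [Function.update_eq_self] at this
  have hcomm : NormedSpace.exp ((φ i) • M) * M = M * NormedSpace.exp ((φ i) • M) :=
    (((Commute.refl M).smul_left (φ i)).exp_left)
  have hLL : Lᴴ * L = 1 := mem_star_self hLmem
  have hB : Bmat H V φ J i = L * H i * Lᴴ := rfl
  have hMH : Mᴴ = Complex.I • H i := by
    rw [hMdef, Matrix.conjTranspose_smul, (hH i).eq]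
    congr 1
    simp [Complex.ext_iff]
  set E := NormedSpace.exp ((φ i) • M)
  set E' := NormedSpace.exp ((φ i) • Mᴴ)
  have hcan : ∀ X : Mat d, Lᴴ * (L * X) = X := fun X => by
    rw [← Matrix.mul_assoc, hLL, Matrix.one_mul]
  rw [hrho, hB, hcomm, hMH, hMdef]
  simp only [Matrix.mul_assoc, add_mul, Matrix.smul_mul, Matrix.mul_smul, smul_sub, smul_smul,
    neg_mul, Complex.I_mul_I, neg_neg, one_smul, neg_smul, sub_eq_add_neg, hcan,
    Matrix.mul_neg, Matrix.neg_mul, neg_add, smul_neg, smul_add]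

/-! ### thermal state spectral facts -/

lemma exp_herm {d : ℕ} {G : Mat d} (hG : G.IsHermitian) {c : ℂ} (hc : star c = c) :
    (NormedSpace.exp (c • G))ᴴ = NormedSpace.exp (c • G) := by
  rw [← Matrix.exp_conjTranspose, Matrix.conjTranspose_smul, hG.eq, hc]

lemma thermal_conjT {d : ℕ} {G : Mat d} (hG : G.IsHermitian) (Z : ℝ) :
    (thermal G Z)ᴴ = thermal G Z := by
  rw [thermal, Matrix.conjTranspose_smul, ← Matrix.exp_conjTranspose,
    Matrix.conjTranspose_neg, hG.eq]
  congr 1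
  rw [star_inv₀, Complex.star_def, Complex.conj_ofReal]

lemma sqrtThermal_sq {d : ℕ} (G : Mat d) {Z : ℝ} (hZpos : 0 < Z) :
    sqrtThermal G Z * sqrtThermal G Z = thermal G Z := by
  rw [sqrtThermal, thermal, Matrix.smul_mul, Matrix.mul_smul, smul_smul,
    ← Matrix.exp_add_of_commute _ _ (Commute.refl _)]
  congr 1
  · rw [← mul_inv]
    norm_cast
    rw [Real.mul_self_sqrt hZpos.le]
  · rw [← add_smul]
    norm_num

lemma sqrt_psd {d : ℕ} {G : Mat d} (hG : G.IsHermitian) {Z : ℝ} (hZpos : 0 < Z)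
    (w : Fin d → ℂ) : 0 ≤ star w ⬝ᵥ (sqrtThermal G Z).mulVec w := by
  set Q := NormedSpace.exp ((-(4⁻¹ : ℂ)) • G) with hQdef
  have hQH : Qᴴ = Q := exp_herm hG (by simp)
  have hQQ : Q * Q = NormedSpace.exp ((-(2⁻¹ : ℂ)) • G) := by
    rw [hQdef, ← Matrix.exp_add_of_commute _ _ (Commute.refl _), ← add_smul]
    norm_num
  have h1 : sqrtThermal G Z = ((Real.sqrt Z : ℂ))⁻¹ • (Qᴴ * Q) := by
    rw [sqrtThermal, hQH, hQQ]
  rw [h1, Matrix.smul_mulVec, dotProduct_smul, ← Matrix.mulVec_mulVec,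
    Matrix.dotProduct_mulVec, ← Matrix.star_mulVec]
  have h2 : (0:ℂ) ≤ ((Real.sqrt Z : ℂ))⁻¹ := by
    rw [show ((Real.sqrt Z : ℂ))⁻¹ = (((Real.sqrt Z)⁻¹ : ℝ) : ℂ) from by push_cast; ring]
    exact Complex.zero_le_real.mpr (by positivity)
  have h3 := dotProduct_star_self_nonneg (Q.mulVec w)
  exact mul_nonneg h2 h3

lemma sqrtThermal_eigen {d : ℕ} {G : Mat d} (hG : G.IsHermitian) {Z : ℝ} (hZpos : 0 < Z)
    {u : Fin d → ℂ} {μ : ℝ} (hμ : 0 < μ) (hu : (thermal G Z).mulVec u = (μ : ℂ) • u) :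
    (sqrtThermal G Z).mulVec u = ((Real.sqrt μ : ℝ) : ℂ) • u := by
  set P := sqrtThermal G Z with hPdef
  set s : ℝ := Real.sqrt μ with hsdef
  have hs : (s:ℂ) * (s:ℂ) = (μ:ℂ) := by
    norm_cast
    exact Real.mul_self_sqrt hμ.le
  set w : Fin d → ℂ := P.mulVec u - (s:ℂ) • u with hwdef
  have hPPu : P.mulVec (P.mulVec u) = (μ:ℂ) • u := by
    rw [Matrix.mulVec_mulVec, sqrtThermal_sq G hZpos, hu]
  have hkey : P.mulVec w + (s:ℂ) • w = 0 := by
    rw [hwdef, Matrix.mulVec_sub, hPPu, Matrix.mulVec_smul, smul_sub, smul_smul, hs]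
    abel
  have hdot : star w ⬝ᵥ P.mulVec w + (s:ℂ) * (star w ⬝ᵥ w) = 0 := by
    have := congrArg (fun z => star w ⬝ᵥ z) hkey
    simpa [dotProduct_add, dotProduct_smul, smul_eq_mul] using this
  have hnn1 : (0:ℂ) ≤ star w ⬝ᵥ P.mulVec w := sqrt_psd hG hZpos w
  have hnn2 : (0:ℂ) ≤ (s:ℂ) * (star w ⬝ᵥ w) :=
    mul_nonneg (Complex.zero_le_real.mpr (Real.sqrt_nonneg μ))
      (dotProduct_star_self_nonneg w)
  have hz : (s:ℂ) * (star w ⬝ᵥ w) = 0 := by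
    rcases (add_eq_zero_iff_of_nonneg hnn1 hnn2).mp hdot with ⟨_, h⟩
    exact h
  have hsne : (s:ℂ) ≠ 0 := by
    simp only [hsdef, ne_eq, Complex.ofReal_eq_zero]
    positivity
  have hw0 : w = 0 := dotProduct_star_self_eq_zero.mp
    ((mul_eq_zero.mp hz).resolve_left hsne)
  rw [hwdef] at hw0
  rw [sub_eq_zero.mp hw0]

/-! ### orthonormal basis machinery -/

def Wmat {d : ℕ} (v : Fin d → Fin d → ℂ) : Mat d := Matrix.of fun i k => v k i

section W
variable {d : ℕ} {v : Fin d → Fin d → ℂ}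
  (hortho : ∀ k l, star (v k) ⬝ᵥ v l = if k = l then 1 else 0)

include hortho

lemma WhW : (Wmat v)ᴴ * Wmat v = 1 := by
  ext k l
  have := hortho k l
  simpa [Matrix.mul_apply, Matrix.conjTranspose_apply, Wmat, dotProduct,
    Matrix.one_apply] using this

lemma WWh : Wmat v * (Wmat v)ᴴ = 1 := mul_eq_one_comm.mp (WhW hortho)

omit hortho in
lemma braket_entry (X : Mat d) (k l : Fin d) :
    braket (v k) X (v l) = ((Wmat v)ᴴ * X * Wmat v) k l := by
  simp only [braket, Matrix.mul_apply, Matrix.conjTranspose_apply, Wmat, Matrix.of_apply,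
    dotProduct, Matrix.mulVec, Finset.sum_mul, Finset.mul_sum, Pi.star_apply]
  rw [Finset.sum_comm]
  apply Finset.sum_congr rfl
  intro i _
  apply Finset.sum_congr rfl
  intro j _
  ring

lemma trace_eq_sum (X : Mat d) : X.trace = ((Wmat v)ᴴ * X * Wmat v).trace := by
  rw [Matrix.trace_mul_comm, ← Matrix.mul_assoc, WWh hortho, Matrix.one_mul]

lemma hat_mul (X Y : Mat d) :
    (Wmat v)ᴴ * (X * Y) * Wmat v = ((Wmat v)ᴴ * X * Wmat v) * ((Wmat v)ᴴ * Y * Wmat v) := by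
  have h := WWh hortho
  calc (Wmat v)ᴴ * (X * Y) * Wmat v
      = (Wmat v)ᴴ * X * (Wmat v * (Wmat v)ᴴ) * Y * Wmat v := by
        rw [h]; noncomm_ring
    _ = ((Wmat v)ᴴ * X * Wmat v) * ((Wmat v)ᴴ * Y * Wmat v) := by noncomm_ring

lemma hat_diag {M : Mat d} {μ : Fin d → ℝ}
    (heig : ∀ k, M.mulVec (v k) = ((μ k : ℝ) : ℂ) • v k) :
    (Wmat v)ᴴ * M * Wmat v = Matrix.diagonal (fun k => ((μ k : ℝ) : ℂ)) := by
  have h : M * Wmat v = Wmat v * Matrix.diagonal (fun k => ((μ k : ℝ) : ℂ)) := by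
    ext i l
    rw [Matrix.mul_diagonal]
    have := congrFun (heig l) i
    simpa [Matrix.mul_apply, Wmat, Matrix.mulVec, dotProduct, mul_comm] using this
  rw [Matrix.mul_assoc, h, ← Matrix.mul_assoc, WhW hortho, Matrix.one_mul]

end W

/-- `⟨u| A X A |w⟩` conjugation rule. -/
lemma braket_mulVec {d : ℕ} (A X : Mat d) (u w : Fin d → ℂ) :
    braket (A.mulVec u) X (A.mulVec w) = braket u (Aᴴ * X * A) w := by
  simp only [braket, Matrix.star_mulVec, Matrix.mulVec_mulVec, Matrix.dotProduct_mulVec,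
    Matrix.vecMul_vecMul, Matrix.mul_assoc]

end WYAux

/-- Wigner–Yanase information matrix of a PQC with thermal-state initialization:
`I^{WY}_{ij}(φ) = 4 Tr[{A_i,A_j} ρ] − 8 Tr[A_i √ρ A_j √ρ]`. -/
theorem wigner_yanase_pqc {d J : ℕ} (hd : 1 ≤ d)
    (H V G : _) (hH : ∀ j, (H j : Mat d).IsHermitian)
    (hV : ∀ j, V j ∈ Matrix.unitaryGroup (Fin d) ℂ)
    (hG : (G : Mat d).IsHermitian)
    (Z : ℝ) (hZpos : 0 < Z) (hZ : (NormedSpace.exp (-G)).trace = (Z : ℂ))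
    (v : Fin d → Fin d → ℂ)
    (hortho : ∀ k l, star (v k) ⬝ᵥ v l = if k = l then 1 else 0)
    (lam : Fin d → ℝ) (hlampos : ∀ k, 0 < lam k)
    (hrhov : ∀ k, (thermal G Z).mulVec (v k) = (lam k : ℂ) • v k)
    (φ : ℕ → ℝ) (i j : ℕ) (hi1 : 1 ≤ i) (hiJ : i ≤ J) (hj1 : 1 ≤ j) (hjJ : j ≤ J)
    (Di Dj : Mat d)
    (hDi : HasDerivAt (fun x : ℝ => rhoFun H V J G Z (Function.update φ i x)) Di (φ i))
    (hDj : HasDerivAt (fun x : ℝ => rhoFun H V J G Z (Function.update φ j x)) Dj (φ j)) :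
    ∑ k : Fin d, ∑ l : Fin d,
        ((4 / (Real.sqrt (lam k) + Real.sqrt (lam l)) ^ 2 : ℝ) : ℂ) *
          braket ((Ufull H V φ J).mulVec (v k)) Di ((Ufull H V φ J).mulVec (v l)) *
          braket ((Ufull H V φ J).mulVec (v l)) Dj ((Ufull H V φ J).mulVec (v k)) =
      4 * ((Amat H V φ i * Amat H V φ j + Amat H V φ j * Amat H V φ i) *
          thermal G Z).trace -
        8 * (Amat H V φ i * sqrtThermal G Z * Amat H V φ j * sqrtThermal G Z).trace := by
  classical
  have hUmem : Ufull H V φ J ∈ Matrix.unitaryGroup (Fin d) ℂ :=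
    descProd_mem _ _ (layer_mem hH hV φ)
  have hUU : (Ufull H V φ J)ᴴ * Ufull H V φ J = 1 := mem_star_self hUmem
  -- identify the derivatives
  have hDieq : Di = (-Complex.I) • (Bmat H V φ J i * rhoFun H V J G Z φ
      - rhoFun H V J G Z φ * Bmat H V φ J i) :=
    hDi.unique (hasDerivAt_rho hH hV G Z φ hi1 hiJ)
  have hDjeq : Dj = (-Complex.I) • (Bmat H V φ J j * rhoFun H V J G Z φ
      - rhoFun H V J G Z φ * Bmat H V φ J j) :=
    hDj.unique (hasDerivAt_rho hH hV G Z φ hj1 hjJ)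
  -- conjugating B by the circuit gives A
  have hconj : ∀ m : ℕ, 1 ≤ m → m ≤ J →
      (Ufull H V φ J)ᴴ * Bmat H V φ J m * Ufull H V φ J = Amat H V φ m := by
    intro m hm1 hm2
    have hL : (UL H V φ J (m+1))ᴴ * UL H V φ J (m+1) = 1 :=
      mem_star_self (descProd_mem _ _ (layer_mem hH hV φ))
    have hcan : ∀ X : Mat d, (UL H V φ J (m+1))ᴴ * (UL H V φ J (m+1) * X) = X := fun X => by
      rw [← Matrix.mul_assoc, hL, Matrix.one_mul]
    rw [Ufull_factor H V φ hm1 hm2, Bmat, Amat, Matrix.conjTranspose_mul]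
    simp only [Matrix.mul_assoc, hcan]
  -- eigen-relations
  have hherm_rho : (thermal G Z)ᴴ = thermal G Z := thermal_conjT hG Z
  have hvstar : ∀ k, Matrix.vecMul (star (v k)) (thermal G Z)
      = ((lam k : ℝ) : ℂ) • star (v k) := by
    intro k
    conv_lhs => rw [← hherm_rho]
    rw [← Matrix.star_mulVec, hrhov k, star_smul]
    congr 1
    simp [Complex.star_def, Complex.conj_ofReal]
  -- conjugating the derivative by the circuit
  have hUDU : ∀ D B : Mat d,
      D = (-Complex.I) • (B * rhoFun H V J G Z φ - rhoFun H V J G Z φ * B) →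
      (Ufull H V φ J)ᴴ * D * Ufull H V φ J
        = (-Complex.I) • (((Ufull H V φ J)ᴴ * B * Ufull H V φ J) * thermal G Z
            - thermal G Z * ((Ufull H V φ J)ᴴ * B * Ufull H V φ J)) := by
    intro D B hD
    have hcanU : ∀ X : Mat d, (Ufull H V φ J)ᴴ * (Ufull H V φ J * X) = X := fun X => by
      rw [← Matrix.mul_assoc, hUU, Matrix.one_mul]
    rw [hD, rhoFun]
    simp only [Matrix.mul_smul, Matrix.smul_mul, Matrix.sub_mul, Matrix.mul_sub,
      Matrix.mul_assoc, hcanU, hUU, Matrix.mul_one]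
  -- per-pair braket formula
  have hbra : ∀ (D A' : Mat d),
      (Ufull H V φ J)ᴴ * D * Ufull H V φ J
        = (-Complex.I) • (A' * thermal G Z - thermal G Z * A') →
      ∀ k l, braket ((Ufull H V φ J).mulVec (v k)) D ((Ufull H V φ J).mulVec (v l))
        = (-Complex.I) * (((lam l : ℝ) : ℂ) - ((lam k : ℝ) : ℂ)) * braket (v k) A' (v l) := by
    intro D A' h k l
    rw [braket_mulVec, h, braket, braket]
    rw [Matrix.smul_mulVec, Matrix.sub_mulVec, dotProduct_smul, dotProduct_sub]
    rw [← Matrix.mulVec_mulVec, hrhov l, Matrix.mulVec_smul, dotProduct_smul]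
    rw [Matrix.dotProduct_mulVec (star (v k)) (thermal G Z * A'),
      ← Matrix.vecMul_vecMul, hvstar k, Matrix.smul_vecMul, smul_dotProduct,
      ← Matrix.dotProduct_mulVec]
    simp only [smul_eq_mul]
    ring
  have hbi := hbra Di (Amat H V φ i) (by rw [hUDU Di _ hDieq, hconj i hi1 hiJ])
  have hbj := hbra Dj (Amat H V φ j) (by rw [hUDU Dj _ hDjeq, hconj j hj1 hjJ])
  -- diagonal form in the eigenbasis
  have hΛ : (Wmat v)ᴴ * thermal G Z * Wmat v
      = Matrix.diagonal (fun k => ((lam k : ℝ) : ℂ)) := hat_diag hortho hrhov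
  have hSig : (Wmat v)ᴴ * sqrtThermal G Z * Wmat v
      = Matrix.diagonal (fun k => ((Real.sqrt (lam k) : ℝ) : ℂ)) :=
    hat_diag hortho (fun k => sqrtThermal_eigen hG hZpos (hlampos k) (hrhov k))
  set α := (Wmat v)ᴴ * Amat H V φ i * Wmat v with hαdef
  set β := (Wmat v)ᴴ * Amat H V φ j * Wmat v with hβdef
  -- trace computations
  have hT1 : (Amat H V φ i * Amat H V φ j * thermal G Z).trace
      = ∑ k, ∑ l, α k l * β l k * ((lam k : ℝ) : ℂ) := by
    rw [trace_eq_sum hortho _, hat_mul hortho (Amat H V φ i * Amat H V φ j) (thermal G Z),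
      hat_mul hortho (Amat H V φ i) (Amat H V φ j), hΛ, ← hαdef, ← hβdef]
    rw [Matrix.trace]
    refine Finset.sum_congr rfl fun k _ => ?_
    rw [Matrix.diag_apply, Matrix.mul_diagonal, Matrix.mul_apply, Finset.sum_mul]
  have hT2 : (Amat H V φ j * Amat H V φ i * thermal G Z).trace
      = ∑ k, ∑ l, α k l * β l k * ((lam l : ℝ) : ℂ) := by
    rw [trace_eq_sum hortho _, hat_mul hortho (Amat H V φ j * Amat H V φ i) (thermal G Z),
      hat_mul hortho (Amat H V φ j) (Amat H V φ i), hΛ, ← hαdef, ← hβdef]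
    have h2 : ((β * α) * Matrix.diagonal (fun k => ((lam k : ℝ) : ℂ))).trace
        = ∑ k, ∑ l, β k l * α l k * ((lam k : ℝ) : ℂ) := by
      rw [Matrix.trace]
      refine Finset.sum_congr rfl fun k _ => ?_
      rw [Matrix.diag_apply, Matrix.mul_diagonal, Matrix.mul_apply, Finset.sum_mul]
    rw [h2, Finset.sum_comm]
    apply Finset.sum_congr rfl
    intro k _
    apply Finset.sum_congr rfl
    intro l _
    ring
  have hT3 : (Amat H V φ i * sqrtThermal G Z * Amat H V φ j * sqrtThermal G Z).trace
      = ∑ k, ∑ l, (α k l * ((Real.sqrt (lam l) : ℝ) : ℂ))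
          * (β l k * ((Real.sqrt (lam k) : ℝ) : ℂ)) := by
    have hgroup : Amat H V φ i * sqrtThermal G Z * Amat H V φ j * sqrtThermal G Z
        = (Amat H V φ i * sqrtThermal G Z) * (Amat H V φ j * sqrtThermal G Z) := by
      noncomm_ring
    rw [hgroup, trace_eq_sum hortho _,
      hat_mul hortho (Amat H V φ i * sqrtThermal G Z) (Amat H V φ j * sqrtThermal G Z),
      hat_mul hortho (Amat H V φ i) (sqrtThermal G Z),
      hat_mul hortho (Amat H V φ j) (sqrtThermal G Z), hSig, ← hαdef, ← hβdef]
    rw [Matrix.trace]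
    refine Finset.sum_congr rfl fun k _ => ?_
    rw [Matrix.diag_apply, Matrix.mul_apply]
    refine Finset.sum_congr rfl fun l _ => ?_
    rw [Matrix.mul_diagonal, Matrix.mul_diagonal]
  -- coefficient identity
  have hco : ∀ k l : Fin d,
      ((4 / (Real.sqrt (lam k) + Real.sqrt (lam l)) ^ 2 : ℝ) : ℂ) *
        ((-Complex.I) * (((lam l : ℝ) : ℂ) - ((lam k : ℝ) : ℂ))) *
        ((-Complex.I) * (((lam k : ℝ) : ℂ) - ((lam l : ℝ) : ℂ)))
      = 4 * ((lam k : ℝ) : ℂ) + 4 * ((lam l : ℝ) : ℂ)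
          - 8 * ((Real.sqrt (lam k) : ℝ) : ℂ) * ((Real.sqrt (lam l) : ℝ) : ℂ) := by
    intro k l
    have hsk0 : 0 < Real.sqrt (lam k) := Real.sqrt_pos.mpr (hlampos k)
    have hsl0 : 0 < Real.sqrt (lam l) := Real.sqrt_pos.mpr (hlampos l)
    have hreal : (4 / (Real.sqrt (lam k) + Real.sqrt (lam l)) ^ 2)
          * ((lam k - lam l) * (lam k - lam l))
        = 4 * lam k + 4 * lam l - 8 * Real.sqrt (lam k) * Real.sqrt (lam l) := by
      set sk := Real.sqrt (lam k) with hskdef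
      set sl := Real.sqrt (lam l) with hsldef
      have hsk : sk ^ 2 = lam k := Real.sq_sqrt (hlampos k).le
      have hsl : sl ^ 2 = lam l := Real.sq_sqrt (hlampos l).le
      have hne : sk + sl ≠ 0 := by positivity
      field_simp
      rw [← hsk, ← hsl]
      ring
    have hrealC := congrArg (fun t : ℝ => (t : ℂ)) hreal
    push_cast at hrealC ⊢
    linear_combination ((4:ℂ) / (((Real.sqrt (lam k) : ℝ) : ℂ) + ((Real.sqrt (lam l) : ℝ) : ℂ)) ^ 2
        * (((lam l : ℝ) : ℂ) - ((lam k : ℝ) : ℂ)) * (((lam k : ℝ) : ℂ) - ((lam l : ℝ) : ℂ)))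
        * Complex.I_mul_I + hrealC
  -- put everything together
  simp only [hbi, hbj]
  rw [Matrix.add_mul, Matrix.trace_add, hT1, hT2, hT3]
  rw [mul_add, Finset.mul_sum, Finset.mul_sum, Finset.mul_sum, ← Finset.sum_add_distrib,
    ← Finset.sum_sub_distrib]
  apply Finset.sum_congr rfl
  intro k _
  rw [Finset.mul_sum, Finset.mul_sum, Finset.mul_sum, ← Finset.sum_add_distrib,
    ← Finset.sum_sub_distrib]
  apply Finset.sum_congr rfl
  intro l _
  have hb : braket (v k) (Amat H V φ i) (v l) = α k l := braket_entry _ k l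
  have hb' : braket (v l) (Amat H V φ j) (v k) = β l k := braket_entry _ l k
  rw [hb, hb']
  linear_combination (α k l * β l k) * (hco k l)
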